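/- Let Ω : M_{d,n}(ℝ) → ℝ satisfy Ω(W + P) ≥ Ω(W) for all W, P with Wᵀ P = 0. Then for any finite set of input vectors x_{ti} ∈ ℝ^d (i ∈ {1,…,m_t}, t ∈ {1,…,n}) and outputs y_{ti}, if the interpolation problem min{Ω(W) : wₜᵀ x_{ti} = y_{ti} for all i, t} has a solution, then it has a solution Ŵ each of whose columns ŵₜ lies in span{x_{si} : s ∈ {1,…,n}, i ∈ {1,…,m_s}}. -/

import Mathlib

open Matrix

theorem stmt_10 {d n : ℕ} (Ω : Matrix (Fin d) (Fin n) ℝ → ℝ)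
    (hΩ : ∀ W P : Matrix (Fin d) (Fin n) ℝ, Wᵀ * P = 0 → Ω W ≤ Ω (W + P))
    (m : Fin n → ℕ) (x : ∀ t : Fin n, Fin (m t) → (Fin d → ℝ))
    (y : ∀ t : Fin n, Fin (m t) → ℝ)
    (W₀ : Matrix (Fin d) (Fin n) ℝ)
    (hW₀c : ∀ (t : Fin n) (i : Fin (m t)), W₀ᵀ t ⬝ᵥ x t i = y t i)
    (hW₀min : ∀ W : Matrix (Fin d) (Fin n) ℝ,
      (∀ (t : Fin n) (i : Fin (m t)), Wᵀ t ⬝ᵥ x t i = y t i) → Ω W₀ ≤ Ω W) :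
    ∃ Whatt : Matrix (Fin d) (Fin n) ℝ,
      (∀ (t : Fin n) (i : Fin (m t)), Whattᵀ t ⬝ᵥ x t i = y t i) ∧
      (∀ W : Matrix (Fin d) (Fin n) ℝ,
        (∀ (t : Fin n) (i : Fin (m t)), Wᵀ t ⬝ᵥ x t i = y t i) → Ω Whatt ≤ Ω W) ∧
      ∀ t : Fin n, Whattᵀ t ∈ Submodule.span ℝ {v : Fin d → ℝ | ∃ s i, v = x s i} := by
  classical
  let S : Set (EuclideanSpace ℝ (Fin d)) := {v | ∃ s i, v = x s i}
  let V : Submodule ℝ (EuclideanSpace ℝ (Fin d)) := Submodule.span ℝ S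
  have hinner : ∀ a b : EuclideanSpace ℝ (Fin d),
      (inner ℝ a b : ℝ) = (a : Fin d → ℝ) ⬝ᵥ (b : Fin d → ℝ) := by
    intro a b
    simp [PiLp.inner_apply, RCLike.inner_apply, dotProduct, mul_comm]
  let w0 : Fin n → EuclideanSpace ℝ (Fin d) := fun t => WithLp.toLp 2 (W₀ᵀ t)
  let wh : Fin n → EuclideanSpace ℝ (Fin d) := fun t => V.orthogonalProjectionOnto (w0 t)
  let Whatt : Matrix (Fin d) (Fin n) ℝ := Matrix.of fun r t => wh t r
  have hTrans : ∀ t, Whattᵀ t = wh t := fun _ => rfl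
  have hmem : ∀ t, wh t ∈ V := fun t => (V.orthogonalProjectionOnto (w0 t)).2
  have hperp : ∀ t, w0 t - wh t ∈ Vᗮ := fun t =>
    Submodule.sub_starProjection_mem_orthogonal (K := V) (w0 t)
  have hxV : ∀ (t : Fin n) (i : Fin (m t)), (WithLp.toLp 2 (x t i) : EuclideanSpace ℝ (Fin d)) ∈ V :=
    fun t i => Submodule.subset_span ⟨t, i, rfl⟩
  have hdiff : ∀ (t : Fin n) (v : Fin d → ℝ),
      ((w0 t - wh t : EuclideanSpace ℝ (Fin d)) : Fin d → ℝ) ⬝ᵥ v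
        = W₀ᵀ t ⬝ᵥ v - Whattᵀ t ⬝ᵥ v := by
    intro t v
    rw [show ((w0 t - wh t : EuclideanSpace ℝ (Fin d)) : Fin d → ℝ)
        = (W₀ᵀ t - Whattᵀ t : Fin d → ℝ) from rfl]
    exact sub_dotProduct _ _ _
  have hconstr : ∀ (t : Fin n) (i : Fin (m t)), Whattᵀ t ⬝ᵥ x t i = y t i := by
    intro t i
    have h0 := (Submodule.mem_orthogonal V _).mp (hperp t) _ (hxV t i)
    rw [hinner, dotProduct_comm] at h0
    rw [hdiff t (x t i), hW₀c t i] at h0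
    linarith
  have hVle : V ≤ (Submodule.span ℝ {v : Fin d → ℝ | ∃ s i, v = x s i}).comap
      (WithLp.linearEquiv 2 ℝ (Fin d → ℝ)).toLinearMap :=
    Submodule.span_le.mpr (fun v ⟨s, i, hv⟩ => Submodule.subset_span ⟨s, i, hv⟩)
  refine ⟨Whatt, hconstr, ?_, fun t => hVle (hmem t)⟩
  intro W hW
  have hzero : Whattᵀ * (W₀ - Whatt) = 0 := by
    ext t s
    have h0 := (Submodule.mem_orthogonal V _).mp (hperp s) _ (hmem t)
    rw [hinner] at h0
    simp only [Matrix.zero_apply]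
    rw [Matrix.mul_apply]
    exact h0
  have h1 : Ω Whatt ≤ Ω (Whatt + (W₀ - Whatt)) := hΩ _ _ hzero
  rw [add_sub_cancel] at h1
  exact h1.trans (hW₀min W hW)
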